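/- For every w ∈ B_1, the map t ↦ g^br_t(w) from [0,1] to [0,1] is non-decreasing and right-continuous. -/

import Mathlib

open Set Filter MeasureTheory Topology UniformConvergence

noncomputable section

/-- Supremum of `f` over the interval `[s,t]`. -/
def intervalMaxOn (f : ℝ → ℝ) (s t : ℝ) : ℝ := sSup (f '' Set.Icc s t)

/-- Infimum of `f` over the interval `[s,t]`. -/
def intervalMinOn (f : ℝ → ℝ) (s t : ℝ) : ℝ := sInf (f '' Set.Icc s t)

/-- `ρ(w)`: the first time in `[0,a]` at which `f` attains its maximum over `[0,a]`. -/
def rho (a : ℝ) (f : ℝ → ℝ) : ℝ := sInf {s | s ∈ Set.Icc 0 a ∧ f s = intervalMaxOn f 0 a}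

/-- membership in `B_a`: continuous bridges of length `a`. -/
def IsBridge (a : ℝ) (f : ℝ → ℝ) : Prop :=
  ContinuousOn f (Set.Icc 0 a) ∧ f 0 = 0 ∧ f a = 0

/-- membership in `B*_a`: bridges whose maximum is attained at a unique point. -/
def IsBridgeStar (a : ℝ) (f : ℝ → ℝ) : Prop :=
  IsBridge a f ∧ ∃! s, s ∈ Set.Icc 0 a ∧ ∀ u ∈ Set.Icc 0 a, f u ≤ f s

/-- membership in `M_a`. -/
def IsMeander (a : ℝ) (f : ℝ → ℝ) : Prop :=
  ContinuousOn f (Set.Icc 0 a) ∧ f 0 = 0 ∧ ∀ s ∈ Set.Icc 0 a, f s ≤ f a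

/-- membership in `M*_a`. -/
def IsMeanderStar (a : ℝ) (f : ℝ → ℝ) : Prop :=
  ContinuousOn f (Set.Icc 0 a) ∧ f 0 = 0 ∧ rho a f = a

/-- The transformation `T^me_a`. -/
def Tme (a : ℝ) (f : ℝ → ℝ) : ℝ → ℝ := fun t =>
  if t ≤ rho a f then f t else f (rho a f) + f (a + rho a f - t)

/-- `γ_{f(a)/2}`: the first time in `[0,a]` at which `f` hits the level `f(a)/2`. -/
def gammaHalf (a : ℝ) (f : ℝ → ℝ) : ℝ := sInf {s | s ∈ Set.Icc 0 a ∧ f s = f a / 2}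

/-- The transformation `T^br_a`. -/
def Tbr (a : ℝ) (f : ℝ → ℝ) : ℝ → ℝ := fun t =>
  if t ≤ gammaHalf a f then f t else f (a + gammaHalf a f - t) - f (gammaHalf a f)

/-- The Brownian scaling map `S_b`. -/
def scaleMap (b : ℝ) (f : ℝ → ℝ) : ℝ → ℝ := fun t => (Real.sqrt b)⁻¹ * f (b * t)

/-- `m^br_t(w)` (for bridges of length `1`). -/
def mbr (f : ℝ → ℝ) (t : ℝ) : ℝ := if t ≤ rho 1 f then intervalMaxOn f 0 t else intervalMaxOn f t 1

/-- `g^br_t(w)`: left endpoint of the excursion of `m^br(w) - w` straddling `t`. -/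
def gbr (f : ℝ → ℝ) (t : ℝ) : ℝ := sSup {s | s ∈ Set.Icc 0 t ∧ mbr f s - f s = 0}

/-- `d^br_t(w)`: right endpoint of the excursion of `m^br(w) - w` straddling `t`,
with the convention `d^br_1(w) = 1`. -/
def dbr (f : ℝ → ℝ) (t : ℝ) : ℝ :=
  if t = 1 then 1 else sInf {s | s ∈ Set.Ioc t 1 ∧ mbr f s - f s = 0}

/-- `r^br_t(w)`: maximum of `m^br(w) - w` over the excursion interval. -/
def rbr (f : ℝ → ℝ) (t : ℝ) : ℝ :=
  sSup ((fun s => mbr f s - f s) '' Set.Icc (gbr f t) (dbr f t))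

/-- `u^br_t(w)`: Lebesgue time spent, up to time `t`, in non-excised excursions. -/
def ubr (f : ℝ → ℝ) (t : ℝ) : ℝ := ∫ s in (0:ℝ)..t, if rbr f s < mbr f s then (1:ℝ) else 0

/-- `α^br_s(w)`, with the convention `α^br_{u^br_1(w)}(w) = 1`. -/
def abr (f : ℝ → ℝ) (s : ℝ) : ℝ :=
  if s = ubr f 1 then 1 else sInf {t | t ∈ Set.Icc (0:ℝ) 1 ∧ s < ubr f t}

/-- `H^br(w)` (as a function; it is relevant on `[0, u^br_1(w)]`). -/
def Hbr (f : ℝ → ℝ) : ℝ → ℝ := fun t => f (abr f t)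

/-- `G^br(w)`. -/
def Gbr (f : ℝ → ℝ) : ℝ → ℝ := if 0 < ubr f 1 then scaleMap (ubr f 1) (Hbr f) else 0

/-- the past-maximum function `w̄`. -/
def pastMax (f : ℝ → ℝ) (t : ℝ) : ℝ := intervalMaxOn f 0 t

/-- `g^me_t(w)`. -/
def gme (f : ℝ → ℝ) (t : ℝ) : ℝ := sSup {s | s ∈ Set.Icc 0 t ∧ pastMax f s - f s = 0}

/-- `d^me_t(w)`, with the convention `d^me_1(w) = 1`. -/
def dme (f : ℝ → ℝ) (t : ℝ) : ℝ :=
  if t = 1 then 1 else sInf {s | s ∈ Set.Ioc t 1 ∧ pastMax f s - f s = 0}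

/-- `r^me_t(w)`. -/
def rme (f : ℝ → ℝ) (t : ℝ) : ℝ :=
  sSup ((fun s => pastMax f s - f s) '' Set.Icc (gme f t) (dme f t))

/-- `u^me_t(w)`. -/
def ume (f : ℝ → ℝ) (t : ℝ) : ℝ :=
  if t ≤ gammaHalf 1 f then ∫ s in (0:ℝ)..t, if rme f s < pastMax f s then (1:ℝ) else 0
  else (∫ s in (0:ℝ)..gammaHalf 1 f, if rme f s < pastMax f s then (1:ℝ) else 0) +
    ∫ s in gammaHalf 1 f..t, if rme f s < pastMax f s - f 1 / 2 then (1:ℝ) else 0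

/-- `α^me_s(w)`, with the convention `α^me_{u^me_1(w)}(w) = 1`. -/
def ame (f : ℝ → ℝ) (s : ℝ) : ℝ :=
  if s = ume f 1 then 1 else sInf {t | t ∈ Set.Icc (0:ℝ) 1 ∧ s < ume f t}

/-- `H^me(w)`. -/
def Hme (f : ℝ → ℝ) : ℝ → ℝ := fun t => f (ame f t)

/-- `G^me(w)`. -/
def Gme (f : ℝ → ℝ) : ℝ → ℝ := if 0 < ume f 1 then scaleMap (ume f 1) (Hme f) else 0

/-- Regularity property (i): uniqueness of one-sided maximizers at rational times. -/
def UniqueOneSidedMax (f : ℝ → ℝ) : Prop :=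
  ∀ t : ℚ, (t : ℝ) ∈ Set.Icc (0:ℝ) 1 →
    (∃! s, s ∈ Set.Icc (0:ℝ) (t:ℝ) ∧ ∀ u ∈ Set.Icc (0:ℝ) (t:ℝ), f u ≤ f s) ∧
    (∃! s, s ∈ Set.Icc ((t:ℝ)) 1 ∧ ∀ u ∈ Set.Icc ((t:ℝ)) 1, f u ≤ f s)

/-- Regularity property (ii): the level `0` is not a strict local minimum of `f` on `[0,1]`. -/
def NoStrictLocalMinAtZero (f : ℝ → ℝ) : Prop :=
  ¬ ∃ t ∈ Set.Icc (0:ℝ) 1, f t = 0 ∧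
      ∃ δ > 0, ∀ s ∈ Set.Icc (0:ℝ) 1, s ≠ t → |s - t| < δ → f t < f s

/-- `w ∈ B^reg_1`. -/
def Regular (f : ℝ → ℝ) : Prop :=
  IsBridge 1 f ∧ UniqueOneSidedMax f ∧ NoStrictLocalMinAtZero f

section AuxStmt5

variable {f : ℝ → ℝ}

lemma aux_bddAbove (hf : ContinuousOn f (Set.Icc 0 1)) {s t : ℝ} (hs : (0:ℝ) ≤ s) (ht : t ≤ 1) :
    BddAbove (f '' Set.Icc s t) :=
  (isCompact_Icc.image_of_continuousOn (hf.mono (Set.Icc_subset_Icc hs ht))).bddAbove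

lemma aux_le_maxOn (hf : ContinuousOn f (Set.Icc 0 1)) {s t u : ℝ} (hs : (0:ℝ) ≤ s) (ht : t ≤ 1)
    (hu : u ∈ Set.Icc s t) : f u ≤ intervalMaxOn f s t :=
  le_csSup (aux_bddAbove hf hs ht) ⟨u, hu, rfl⟩

lemma aux_maxOn_le {s t c : ℝ} (hst : s ≤ t) (h : ∀ u ∈ Set.Icc s t, f u ≤ c) :
    intervalMaxOn f s t ≤ c :=
  csSup_le ((Set.nonempty_Icc.2 hst).image f) (by rintro _ ⟨u, hu, rfl⟩; exact h u hu)

lemma aux_maxOn_mono (hf : ContinuousOn f (Set.Icc 0 1)) {s t s' t' : ℝ}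
    (hs : (0:ℝ) ≤ s') (ht : t' ≤ 1) (hst : s ≤ t) (h : Set.Icc s t ⊆ Set.Icc s' t') :
    intervalMaxOn f s t ≤ intervalMaxOn f s' t' :=
  csSup_le_csSup (aux_bddAbove hf hs ht) ((Set.nonempty_Icc.2 hst).image f)
    (Set.image_mono h)

lemma aux_maxOn_split (hf : ContinuousOn f (Set.Icc 0 1)) {s m t : ℝ}
    (hs : (0:ℝ) ≤ s) (ht : t ≤ 1) (h1 : s ≤ m) (h2 : m ≤ t) :
    intervalMaxOn f s t = max (intervalMaxOn f s m) (intervalMaxOn f m t) := by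
  have hsm : (0:ℝ) ≤ s := hs
  have hm1 : m ≤ 1 := le_trans h2 ht
  have hm0 : (0:ℝ) ≤ m := le_trans hs h1
  have hE : Set.Icc s t = Set.Icc s m ∪ Set.Icc m t := (Set.Icc_union_Icc_eq_Icc h1 h2).symm
  rw [intervalMaxOn, hE, Set.image_union,
    csSup_union (aux_bddAbove hf hs hm1) ((Set.nonempty_Icc.2 h1).image f)
      (aux_bddAbove hf hm0 ht) ((Set.nonempty_Icc.2 h2).image f)]
  rfl

lemma aux_rho_spec (hf : ContinuousOn f (Set.Icc 0 1)) :
    rho 1 f ∈ Set.Icc (0:ℝ) 1 ∧ f (rho 1 f) = intervalMaxOn f 0 1 := by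
  set S : Set ℝ := {s | s ∈ Set.Icc (0:ℝ) 1 ∧ f s = intervalMaxOn f 0 1} with hS
  have hSne : S.Nonempty := by
    obtain ⟨x, hx, hmax⟩ := isCompact_Icc.exists_isMaxOn (Set.nonempty_Icc.2 zero_le_one) hf
    refine ⟨x, hx, le_antisymm (aux_le_maxOn hf le_rfl le_rfl hx) (aux_maxOn_le zero_le_one ?_)⟩
    exact fun u hu => hmax hu
  have hScl : IsClosed S := by
    have : S = Set.Icc (0:ℝ) 1 ∩ f ⁻¹' {intervalMaxOn f 0 1} := by
      ext z; simp [hS, Set.mem_inter_iff]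
    rw [this]
    exact hf.preimage_isClosed_of_isClosed isClosed_Icc isClosed_singleton
  have hSbdd : BddBelow S := ⟨0, fun z hz => hz.1.1⟩
  have : rho 1 f ∈ S := hScl.csInf_mem hSne hSbdd
  exact ⟨this.1, this.2⟩

lemma aux_maxOn_left_rho (hf : ContinuousOn f (Set.Icc 0 1)) :
    intervalMaxOn f 0 (rho 1 f) = intervalMaxOn f 0 1 := by
  obtain ⟨hr, hfr⟩ := aux_rho_spec hf
  refine le_antisymm (aux_maxOn_mono hf le_rfl le_rfl hr.1 (Set.Icc_subset_Icc le_rfl hr.2)) ?_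
  rw [← hfr]
  exact aux_le_maxOn hf le_rfl hr.2 ⟨hr.1, le_rfl⟩

lemma aux_maxOn_right_rho (hf : ContinuousOn f (Set.Icc 0 1)) :
    intervalMaxOn f (rho 1 f) 1 = intervalMaxOn f 0 1 := by
  obtain ⟨hr, hfr⟩ := aux_rho_spec hf
  refine le_antisymm (aux_maxOn_mono hf le_rfl le_rfl hr.2 (Set.Icc_subset_Icc hr.1 le_rfl)) ?_
  rw [← hfr]
  exact aux_le_maxOn hf hr.1 le_rfl ⟨le_rfl, hr.2⟩

lemma aux_mbr_continuousOn (hf : ContinuousOn f (Set.Icc 0 1)) :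
    ContinuousOn (mbr f) (Set.Icc 0 1) := by
  obtain ⟨hr, hfr⟩ := aux_rho_spec hf
  intro t ht
  rw [Metric.continuousWithinAt_iff]
  intro ε hε
  have huc := isCompact_Icc.uniformContinuousOn_of_continuous hf
  rw [Metric.uniformContinuousOn_iff] at huc
  obtain ⟨δ, hδ, hmod⟩ := huc (ε/3) (by linarith)
  have key : ∀ a b : ℝ, a ∈ Set.Icc (0:ℝ) 1 → b ∈ Set.Icc (0:ℝ) 1 → a ≤ b → b - a < δ →
      |mbr f b - mbr f a| ≤ 2*(ε/3) := by
    intro a b ha hb hab hd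
    -- modulus on [a,b]
    have hmodab : ∀ u v : ℝ, u ∈ Set.Icc a b → v ∈ Set.Icc a b → f u ≤ f v + ε/3 := by
      intro u v hu hv
      have hu1 : u ∈ Set.Icc (0:ℝ) 1 := ⟨le_trans ha.1 hu.1, le_trans hu.2 hb.2⟩
      have hv1 : v ∈ Set.Icc (0:ℝ) 1 := ⟨le_trans ha.1 hv.1, le_trans hv.2 hb.2⟩
      have : dist u v < δ := by
        rw [Real.dist_eq, abs_lt]
        constructor <;> nlinarith [hu.1, hu.2, hv.1, hv.2]
      have := hmod u hu1 v hv1 this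
      rw [Real.dist_eq, abs_lt] at this
      linarith [this.1, this.2]
    set r := rho 1 f with hrdef
    by_cases hbr : b ≤ r
    · -- both left branch
      have har : a ≤ r := le_trans hab hbr
      have h1 : mbr f a = intervalMaxOn f 0 a := if_pos har
      have h2 : mbr f b = intervalMaxOn f 0 b := if_pos hbr
      have hsplit : intervalMaxOn f 0 b = max (intervalMaxOn f 0 a) (intervalMaxOn f a b) :=
        aux_maxOn_split hf le_rfl hb.2 ha.1 hab
      have hmono : intervalMaxOn f 0 a ≤ intervalMaxOn f 0 b :=
        aux_maxOn_mono hf le_rfl hb.2 ha.1 (Set.Icc_subset_Icc le_rfl hab)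
      have hup : intervalMaxOn f 0 b ≤ intervalMaxOn f 0 a + ε/3 := by
        rw [hsplit]
        refine max_le (by linarith) ?_
        refine le_trans (aux_maxOn_le hab fun u hu => hmodab u a hu ⟨le_rfl, hab⟩) ?_
        have : f a ≤ intervalMaxOn f 0 a := aux_le_maxOn hf le_rfl ha.2 ⟨ha.1, le_rfl⟩
        linarith
      rw [h1, h2, abs_le]; constructor <;> linarith
    · by_cases har : a ≤ r
      · -- mixed
        have hrb : r < b := lt_of_not_ge hbr
        have hra : a ≤ r := har
        have h1 : mbr f a = intervalMaxOn f 0 a := if_pos har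
        have h2 : mbr f b = intervalMaxOn f b 1 := if_neg hbr
        have hfa : f a ≤ intervalMaxOn f 0 a := aux_le_maxOn hf le_rfl ha.2 ⟨ha.1, le_rfl⟩
        have hfb : f b ≤ intervalMaxOn f b 1 := aux_le_maxOn hf hb.1 le_rfl ⟨le_rfl, hb.2⟩
        have hAle : intervalMaxOn f 0 a ≤ intervalMaxOn f 0 1 :=
          aux_maxOn_mono hf le_rfl le_rfl ha.1 (Set.Icc_subset_Icc le_rfl ha.2)
        have hBle : intervalMaxOn f b 1 ≤ intervalMaxOn f 0 1 :=
          aux_maxOn_mono hf le_rfl le_rfl hb.2 (Set.Icc_subset_Icc hb.1 le_rfl)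
        have hAsplit : intervalMaxOn f 0 r = max (intervalMaxOn f 0 a) (intervalMaxOn f a r) :=
          aux_maxOn_split hf le_rfl hr.2 ha.1 hra
        have hBsplit : intervalMaxOn f r 1 = max (intervalMaxOn f r b) (intervalMaxOn f b 1) :=
          aux_maxOn_split hf hr.1 le_rfl (le_of_lt hrb) hb.2
        have hAlow : intervalMaxOn f 0 1 ≤ intervalMaxOn f 0 a + ε/3 := by
          rw [← aux_maxOn_left_rho hf, ← hrdef, hAsplit]
          refine max_le (by linarith) ?_
          refine le_trans (aux_maxOn_le hra fun u hu =>
            hmodab u a ⟨hu.1, le_trans hu.2 (le_of_lt hrb)⟩ ⟨le_rfl, hab⟩) ?_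
          linarith
        have hBlow : intervalMaxOn f 0 1 ≤ intervalMaxOn f b 1 + ε/3 := by
          rw [← aux_maxOn_right_rho hf, ← hrdef, hBsplit]
          refine max_le ?_ (by linarith)
          refine le_trans (aux_maxOn_le (le_of_lt hrb) fun u hu =>
            hmodab u b ⟨le_trans hra hu.1, hu.2⟩ ⟨hab, le_rfl⟩) ?_
          linarith
        rw [h1, h2, abs_le]; constructor <;> linarith
      · -- both right branch
        have h1 : mbr f a = intervalMaxOn f a 1 := if_neg har
        have h2 : mbr f b = intervalMaxOn f b 1 := if_neg hbr
        have hsplit : intervalMaxOn f a 1 = max (intervalMaxOn f a b) (intervalMaxOn f b 1) :=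
          aux_maxOn_split hf ha.1 le_rfl hab hb.2
        have hmono : intervalMaxOn f b 1 ≤ intervalMaxOn f a 1 :=
          aux_maxOn_mono hf ha.1 le_rfl hb.2 (Set.Icc_subset_Icc hab le_rfl)
        have hup : intervalMaxOn f a 1 ≤ intervalMaxOn f b 1 + ε/3 := by
          rw [hsplit]
          refine max_le ?_ (by linarith)
          refine le_trans (aux_maxOn_le hab fun u hu => hmodab u b hu ⟨hab, le_rfl⟩) ?_
          have : f b ≤ intervalMaxOn f b 1 := aux_le_maxOn hf hb.1 le_rfl ⟨le_rfl, hb.2⟩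
          linarith
        rw [h1, h2, abs_le]; constructor <;> linarith
  refine ⟨δ, hδ, fun x hx hdist => ?_⟩
  rw [Real.dist_eq] at hdist ⊢
  rcases le_total x t with h | h
  · have := key x t hx ht h (by rw [abs_sub_comm] at hdist; exact lt_of_le_of_lt (le_abs_self _) hdist)
    rw [abs_sub_comm] at this
    linarith [this]
  · have := key t x ht hx h (lt_of_le_of_lt (le_abs_self _) hdist)
    linarith [this]

end AuxStmt5

/-- for a bridge `w`, the map `t ↦ g^br_t(w)` maps `[0,1]` into `[0,1]`,
is non-decreasing on `[0,1]`, and is right-continuous there. -/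
theorem stmt5 (w : ℝ → ℝ) (hw : IsBridge 1 w) :
    (∀ t ∈ Set.Icc (0:ℝ) 1, gbr w t ∈ Set.Icc (0:ℝ) 1) ∧
    MonotoneOn (gbr w) (Set.Icc 0 1) ∧
    (∀ t ∈ Set.Icc (0:ℝ) 1, ContinuousWithinAt (gbr w) (Set.Icc t 1) t) := by
  obtain ⟨hf, h0, h1⟩ := hw
  obtain ⟨hr, hfr⟩ := aux_rho_spec hf
  set Z : Set ℝ := {s : ℝ | s ∈ Set.Icc (0:ℝ) 1 ∧ mbr w s - w s = 0} with hZdef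
  have hZc : IsClosed Z := by
    have hcont : ContinuousOn (fun s => mbr w s - w s) (Set.Icc (0:ℝ) 1) :=
      (aux_mbr_continuousOn hf).sub hf
    have : Z = Set.Icc (0:ℝ) 1 ∩ (fun s => mbr w s - w s) ⁻¹' {0} := by
      ext z; simp [hZdef, Set.mem_inter_iff]
    rw [this]
    exact hcont.preimage_isClosed_of_isClosed isClosed_Icc isClosed_singleton
  have h0Z : (0:ℝ) ∈ Z := by
    have hm0 : mbr w 0 = w 0 := by
      rw [mbr, if_pos hr.1, intervalMaxOn, Set.Icc_self, Set.image_singleton, csSup_singleton]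
    exact ⟨⟨le_rfl, zero_le_one⟩, by rw [hm0]; ring⟩
  have hset : ∀ t ∈ Set.Icc (0:ℝ) 1,
      {s | s ∈ Set.Icc (0:ℝ) t ∧ mbr w s - w s = 0} = Z ∩ Set.Iic t := by
    intro t ht
    ext z
    simp only [hZdef, Set.mem_setOf_eq, Set.mem_inter_iff, Set.mem_Iic, Set.mem_Icc]
    constructor
    · rintro ⟨⟨hz0, hzt⟩, hz⟩; exact ⟨⟨⟨hz0, le_trans hzt ht.2⟩, hz⟩, hzt⟩
    · rintro ⟨⟨⟨hz0, _⟩, hz⟩, hzt⟩; exact ⟨⟨hz0, hzt⟩, hz⟩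
  have hg : ∀ t ∈ Set.Icc (0:ℝ) 1, gbr w t = sSup (Z ∩ Set.Iic t) := by
    intro t ht; rw [gbr, hset t ht]
  have hbdd : ∀ t : ℝ, BddAbove (Z ∩ Set.Iic t) :=
    fun t => BddAbove.mono Set.inter_subset_right bddAbove_Iic
  have hne : ∀ t ∈ Set.Icc (0:ℝ) 1, (Z ∩ Set.Iic t).Nonempty :=
    fun t ht => ⟨0, h0Z, ht.1⟩
  have hgle : ∀ t ∈ Set.Icc (0:ℝ) 1, gbr w t ≤ t := by
    intro t ht
    rw [hg t ht]
    exact csSup_le (hne t ht) fun x hx => hx.2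
  have hgge : ∀ t ∈ Set.Icc (0:ℝ) 1, 0 ≤ gbr w t := by
    intro t ht
    rw [hg t ht]
    exact le_csSup (hbdd t) ⟨h0Z, ht.1⟩
  have hmono : MonotoneOn (gbr w) (Set.Icc 0 1) := by
    intro a ha b hb hab
    rw [hg a ha, hg b hb]
    exact csSup_le_csSup (hbdd b) (hne a ha)
      (Set.inter_subset_inter_right _ (Set.Iic_subset_Iic.2 hab))
  refine ⟨fun t ht => ⟨hgge t ht, le_trans (hgle t ht) ht.2⟩, hmono, ?_⟩
  intro t ht
  set Z' : Set ℝ := Z ∩ Set.Ioc t 1 with hZ'def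
  have hZ'bdd : BddBelow Z' := ⟨t, fun z hz => le_of_lt hz.2.1⟩
  by_cases hZ'ne : Z'.Nonempty
  · set d : ℝ := sInf Z' with hddef
    have hdt : t ≤ d := le_csInf hZ'ne fun z hz => le_of_lt hz.2.1
    rcases eq_or_lt_of_le hdt with hdeq | hdlt
    · -- d = t : t ∈ Z, squeeze
      have htZ : t ∈ Z := by
        have hcl : d ∈ closure Z' := csInf_mem_closure hZ'ne hZ'bdd
        have : closure Z' ⊆ Z := closure_minimal Set.inter_subset_left hZc
        rw [← hdeq] at hcl
        exact this hcl
      have hgt : gbr w t = t := by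
        refine le_antisymm (hgle t ht) ?_
        rw [hg t ht]
        exact le_csSup (hbdd t) ⟨htZ, Set.mem_Iic.2 le_rfl⟩
      rw [Metric.continuousWithinAt_iff]
      intro ε hε
      refine ⟨ε, hε, fun x hx hdist => ?_⟩
      have hx1 : x ∈ Set.Icc (0:ℝ) 1 := ⟨le_trans ht.1 hx.1, hx.2⟩
      have h1 : gbr w t ≤ gbr w x := hmono ht hx1 hx.1
      have h2 : gbr w x ≤ x := hgle x hx1
      rw [Real.dist_eq] at hdist ⊢
      rw [hgt] at h1 ⊢
      rw [abs_lt] at hdist ⊢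
      constructor <;> [linarith [hdist.1]; linarith [hdist.2, h1, h2]]
    · -- t < d : locally constant
      have hconst : ∀ y ∈ Set.Icc t 1 ∩ Set.Iio d, gbr w y = gbr w t := by
        intro y hy
        have hy1 : y ∈ Set.Icc (0:ℝ) 1 := ⟨le_trans ht.1 hy.1.1, hy.1.2⟩
        rw [hg y hy1, hg t ht]
        congr 1
        ext z
        simp only [Set.mem_inter_iff, Set.mem_Iic]
        constructor
        · rintro ⟨hzZ, hzy⟩
          refine ⟨hzZ, ?_⟩
          by_contra hzt
          push_neg at hzt
          have : z ∈ Z' := ⟨hzZ, hzt, le_trans hzy hy1.2⟩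
          have := csInf_le hZ'bdd this
          have hyd : y < d := hy.2
          linarith
        · rintro ⟨hzZ, hzt⟩; exact ⟨hzZ, le_trans hzt hy.1.1⟩
      have hev : ∀ᶠ y in 𝓝[Set.Icc t 1] t, gbr w y = gbr w t := by
        have h1 : Set.Iio d ∈ 𝓝[Set.Icc t 1] t :=
          nhdsWithin_le_nhds (Iio_mem_nhds hdlt)
        have h2 : Set.Icc t 1 ∈ 𝓝[Set.Icc t 1] t := self_mem_nhdsWithin
        filter_upwards [h1, h2] with y hy1 hy2
        exact hconst y ⟨hy2, hy1⟩
      refine ContinuousWithinAt.congr_of_eventuallyEq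
        (continuousWithinAt_const) hev rfl
  · -- Z' empty: constant on [t,1]
    have hconst : ∀ y ∈ Set.Icc t 1, gbr w y = gbr w t := by
      intro y hy
      have hy1 : y ∈ Set.Icc (0:ℝ) 1 := ⟨le_trans ht.1 hy.1, hy.2⟩
      rw [hg y hy1, hg t ht]
      congr 1
      ext z
      simp only [Set.mem_inter_iff, Set.mem_Iic]
      constructor
      · rintro ⟨hzZ, hzy⟩
        refine ⟨hzZ, ?_⟩
        by_contra hzt
        push_neg at hzt
        exact hZ'ne ⟨z, hzZ, hzt, le_trans hzy hy1.2⟩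
      · rintro ⟨hzZ, hzt⟩; exact ⟨hzZ, le_trans hzt hy.1⟩
    exact ContinuousWithinAt.congr (continuousWithinAt_const) hconst rfl
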